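/- Let m ≥ 1, let α₀, …, α_m : ℂ → ℂ and γ : ℂ → ℂ, and define functions β_{m−1}, …, β₀ : ℂ → ℂ by the downward recurrence β_{m−1} := α_m and β_{k−1}(x) := α_k(x) + β_k(x)·γ(x+k) for k = m−1, m−2, …, 1. Then for every function f : ℂ → ℂ and every x ∈ ℂ: Σ_{j=0}^{m} α_j(x)·f(x+j) = Σ_{k=0}^{m−1} β_k(x)·( f(x+k+1) − γ(x+k)·f(x+k) ) + ( α₀(x) + β₀(x)·γ(x) )·f(x). -/

import Mathlib

/-- Pincherle's extension of Ruffini's rule: dividing the difference-form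
Σ_{j=0}^m α_j θ^j by the first-order form θ − γ, with quotient coefficients β_k
given by the downward recurrence β_{m−1} = α_m, β_{k−1}(x) = α_k(x) + β_k(x)·γ(x+k). -/
theorem pincherle_ruffini_rule (m : ℕ) (hm : 1 ≤ m) (α β : ℕ → ℂ → ℂ) (γ : ℂ → ℂ)
    (hβtop : β (m - 1) = α m)
    (hβrec : ∀ k : ℕ, 1 ≤ k → k ≤ m - 1 → ∀ x : ℂ,
      β (k - 1) x = α k x + β k x * γ (x + (k : ℂ))) :
    ∀ (f : ℂ → ℂ) (x : ℂ),
      ∑ j ∈ Finset.range (m + 1), α j x * f (x + (j : ℂ)) =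
        (∑ k ∈ Finset.range m,
          β k x * (f (x + (k : ℂ) + 1) - γ (x + (k : ℂ)) * f (x + (k : ℂ)))) +
        (α 0 x + β 0 x * γ x) * f x := by
  obtain ⟨n, rfl⟩ : ∃ n, m = n + 1 := ⟨m - 1, (Nat.succ_pred_eq_of_pos hm).symm⟩
  simp only [Nat.add_sub_cancel] at hβtop hβrec
  intro f x
  simp only [add_assoc x]
  have hrec : ∀ k, k < n →
      β (k + 1) x * γ (x + ((k : ℂ) + 1)) = β k x - α (k + 1) x := by
    intro k hk
    have h := hβrec (k + 1) (by omega) (by omega) x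
    simp only [Nat.add_sub_cancel] at h
    push_cast at h
    rw [h]; ring
  have expand : (∑ k ∈ Finset.range (n + 1),
        β k x * (f (x + ((k : ℂ) + 1)) - γ (x + (k : ℂ)) * f (x + (k : ℂ)))) =
      (∑ k ∈ Finset.range (n + 1), β k x * f (x + ((k : ℂ) + 1))) -
      (∑ k ∈ Finset.range (n + 1), β k x * γ (x + (k : ℂ)) * f (x + (k : ℂ))) := by
    rw [← Finset.sum_sub_distrib]
    exact Finset.sum_congr rfl fun k _ => by ring
  rw [expand]
  rw [Finset.sum_range_succ (fun k => β k x * f (x + ((k : ℂ) + 1))) n]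
  rw [Finset.sum_range_succ' (fun k => β k x * γ (x + (k : ℂ)) * f (x + (k : ℂ))) n]
  rw [Finset.sum_range_succ' (fun j => α j x * f (x + (j : ℂ))) (n + 1)]
  rw [Finset.sum_range_succ (fun j => α (j + 1) x * f (x + ((j : ℕ) + 1 : ℕ))) n]
  have hB : (∑ k ∈ Finset.range n,
        β (k + 1) x * γ (x + ((k : ℕ) + 1 : ℕ)) * f (x + ((k : ℕ) + 1 : ℕ))) =
      ∑ k ∈ Finset.range n, (β k x - α (k + 1) x) * f (x + ((k : ℂ) + 1)) := by
    refine Finset.sum_congr rfl fun k hk => ?_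
    have := hrec k (Finset.mem_range.mp hk)
    push_cast
    rw [this]
  rw [hB, hβtop]
  push_cast
  simp only [add_assoc, add_zero]
  have hsum : (∑ k ∈ Finset.range n, β k x * f (x + ((k : ℂ) + 1))) -
      ∑ k ∈ Finset.range n, (β k x - α (k + 1) x) * f (x + ((k : ℂ) + 1)) =
      ∑ k ∈ Finset.range n, α (k + 1) x * f (x + ((k : ℂ) + 1)) := by
    rw [← Finset.sum_sub_distrib]
    exact Finset.sum_congr rfl fun k _ => by ring
  linear_combination -hsum
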